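/- For every k ≥ 1, there exists a continuous map f : S(ℍ^k) → S^{3k-1} (the unit sphere in ℝ^{3k}) satisfying f(x·e^{iθ}) = f(x) for all θ ∈ ℝ and f(x·j) = −f(x), for all x ∈ S(ℍ^k). -/

import Mathlib

noncomputable section

/-- The unit sphere `S^{n-1}` in `ℝ^n`. -/
noncomputable abbrev rSphere (n : ℕ) : Type :=
  Metric.sphere (0 : EuclideanSpace ℝ (Fin n)) 1

/-- `ℍ^k` with its `ℓ²` norm. -/
noncomputable abbrev Hn (k : ℕ) : Type :=
  PiLp 2 (fun _ : Fin k => Quaternion ℝ)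

/-- The unit sphere `S(ℍ^k)`. -/
noncomputable abbrev hSphere (k : ℕ) : Type := Metric.sphere (0 : Hn k) 1

/-- The quaternion `e^{iθ} = cos θ + (sin θ) i`. -/
def expI (θ : ℝ) : Quaternion ℝ := ⟨Real.cos θ, Real.sin θ, 0, 0⟩

/-- The quaternion unit `j`. -/
def quatJ : Quaternion ℝ := ⟨0, 0, 1, 0⟩

lemma norm_expI (θ : ℝ) : ‖expI θ‖ = 1 := by
  have h : Quaternion.normSq (expI θ) = 1 := by
    rw [Quaternion.normSq_def']
    simp only [expI]
    nlinarith [Real.sin_sq_add_cos_sq θ]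
  have h2 : ‖expI θ‖ * ‖expI θ‖ = 1 := by
    rw [← Quaternion.normSq_eq_norm_mul_self, h]
  rcases mul_self_eq_one_iff.1 h2 with h3 | h3
  · exact h3
  · nlinarith [norm_nonneg (expI θ)]

lemma norm_quatJ : ‖quatJ‖ = 1 := by
  have h : Quaternion.normSq quatJ = 1 := by
    rw [Quaternion.normSq_def']
    simp [quatJ]
  have h2 : ‖quatJ‖ * ‖quatJ‖ = 1 := by
    rw [← Quaternion.normSq_eq_norm_mul_self, h]
  rcases mul_self_eq_one_iff.1 h2 with h3 | h3
  · exact h3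
  · nlinarith [norm_nonneg quatJ]

lemma Hn.norm_congr {k : ℕ} (x y : Hn k) (h : ∀ a, ‖y a‖ = ‖x a‖) : ‖y‖ = ‖x‖ := by
  rw [PiLp.norm_eq_sum (by norm_num), PiLp.norm_eq_sum (by norm_num)]
  congr 1
  exact Finset.sum_congr rfl fun a _ => by rw [h]

/-- Coordinatewise right multiplication by a unit quaternion, on the sphere `S(ℍ^k)`. -/
def sphereRMul {k : ℕ} (u : Quaternion ℝ) (hu : ‖u‖ = 1) (x : hSphere k) : hSphere k :=
  ⟨(WithLp.toLp 2 (fun a => (x : Hn k) a * u) : Hn k), by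
    have hx := x.2
    simp only [mem_sphere_iff_norm, sub_zero] at hx ⊢
    have h := Hn.norm_congr (x : Hn k) (WithLp.toLp 2 (fun a => (x : Hn k) a * u))
      (fun a => by show ‖(x : Hn k) a * u‖ = _; rw [norm_mul, hu, mul_one])
    rw [h, hx]⟩



def qi : Quaternion ℝ := ⟨0, 1, 0, 0⟩

lemma expI_conj (θ : ℝ) : expI θ * qi * star (expI θ) = qi := by
  ext <;> simp only [Quaternion.re_mul, Quaternion.imI_mul, Quaternion.imJ_mul, Quaternion.imK_mul, Quaternion.re_star, Quaternion.imI_star, Quaternion.imJ_star, Quaternion.imK_star] <;> simp [expI, qi] <;> ring_nf <;>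
    nlinarith [Real.sin_sq_add_cos_sq θ]

lemma quatJ_conj : quatJ * qi * star quatJ = -qi := by
  ext <;> simp only [Quaternion.re_mul, Quaternion.imI_mul, Quaternion.imJ_mul, Quaternion.imK_mul, Quaternion.re_star, Quaternion.imI_star, Quaternion.imJ_star, Quaternion.imK_star, Quaternion.re_neg, Quaternion.imI_neg, Quaternion.imJ_neg, Quaternion.imK_neg] <;> simp [quatJ, qi]

def coordFn : Fin 3 → Quaternion ℝ → ℝ := fun b q => ![q.imI, q.imJ, q.imK] b

lemma coordFn_neg (b : Fin 3) (q : Quaternion ℝ) : coordFn b (-q) = - coordFn b q := by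
  fin_cases b <;> simp [coordFn]

lemma coordFn_continuous (b : Fin 3) : Continuous (coordFn b) := by
  fin_cases b <;> simp only [coordFn] <;>
  first
  | exact Quaternion.continuous_imI
  | exact Quaternion.continuous_imJ
  | exact Quaternion.continuous_imK

def qform {k : ℕ} (x : Hn k) (a : Fin k) : Quaternion ℝ := x a * qi * star (x a)

def gmap {k : ℕ} (x : Hn k) : EuclideanSpace ℝ (Fin (3 * k)) :=
  WithLp.toLp 2 (fun m => coordFn (finProdFinEquiv.symm m).1 (qform x (finProdFinEquiv.symm m).2))

lemma gmap_continuous {k : ℕ} : Continuous (gmap (k := k)) := by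
  have h1 : Continuous fun x : Hn k => (fun m : Fin (3 * k) =>
      coordFn (finProdFinEquiv.symm m).1 (qform x (finProdFinEquiv.symm m).2)) := by
    apply continuous_pi
    intro m
    apply (coordFn_continuous _).comp
    have hev : Continuous fun x : Hn k => x (finProdFinEquiv.symm m).2 :=
      (continuous_apply _).comp (PiLp.continuous_ofLp 2 _)
    exact (hev.mul continuous_const).mul hev.star
  exact (PiLp.continuous_toLp 2 _).comp h1

lemma qform_re {k : ℕ} (x : Hn k) (a : Fin k) : (qform x a).re = 0 := by
  have h : star (qform x a) = - qform x a := by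
    simp only [qform, star_mul, star_star, mul_assoc]
    have : star qi = -qi := by ext <;> simp only [Quaternion.re_star, Quaternion.imI_star, Quaternion.imJ_star, Quaternion.imK_star, Quaternion.re_neg, Quaternion.imI_neg, Quaternion.imJ_neg, Quaternion.imK_neg] <;> simp [qi]
    rw [this]
    simp [mul_assoc]
  have := congrArg QuaternionAlgebra.re h
  simp only [Quaternion.re_star, Quaternion.re_neg] at this
  linarith

lemma qform_eq_zero {k : ℕ} (x : Hn k) (a : Fin k)
    (h : ∀ b : Fin 3, coordFn b (qform x a) = 0) : x a = 0 := by
  have h0 : qform x a = 0 := by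
    ext
    · exact qform_re x a
    · exact h 0
    · exact h 1
    · exact h 2
  have hqi : ‖qi‖ = 1 := by
    have hsq : Quaternion.normSq qi = 1 := by rw [Quaternion.normSq_def']; simp [qi]
    have h2 : ‖qi‖ * ‖qi‖ = 1 := by rw [← Quaternion.normSq_eq_norm_mul_self, hsq]
    rcases mul_self_eq_one_iff.1 h2 with h3 | h3
    · exact h3
    · nlinarith [norm_nonneg qi]
  have hn : ‖qform x a‖ = ‖x a‖ * ‖x a‖ := by
    rw [qform, norm_mul, norm_mul, norm_star, hqi, mul_one]
  rw [h0, norm_zero] at hn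
  exact norm_eq_zero.1 (mul_self_eq_zero.1 hn.symm)

lemma gmap_ne_zero {k : ℕ} (x : Hn k) (hx : ‖x‖ = 1) : gmap x ≠ 0 := by
  intro h
  have hxz : x = 0 := by
    ext a : 1
    apply qform_eq_zero x a
    intro b
    have := congrArg (fun v => v (finProdFinEquiv (b, a))) h
    simp only [gmap, PiLp.toLp_apply, Equiv.symm_apply_apply, PiLp.zero_apply] at this
    exact this
  rw [hxz] at hx
  simp at hx

lemma gmap_mul {k : ℕ} (x : Hn k) (u : Quaternion ℝ) :
    gmap (WithLp.toLp 2 (fun a => x a * u) : Hn k) =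
      WithLp.toLp 2 fun m => coordFn (finProdFinEquiv.symm m).1
        (x (finProdFinEquiv.symm m).2 * (u * qi * star u) * star (x (finProdFinEquiv.symm m).2)) := by
  simp only [gmap, qform]
  congr 1
  funext m
  simp only [star_mul, mul_assoc]

lemma gmap_expI {k : ℕ} (x : Hn k) (θ : ℝ) :
    gmap (WithLp.toLp 2 (fun a => x a * expI θ) : Hn k) = gmap x := by
  rw [gmap_mul, expI_conj]
  rfl

lemma gmap_quatJ {k : ℕ} (x : Hn k) :
    gmap (WithLp.toLp 2 (fun a => x a * quatJ) : Hn k) = - gmap x := by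
  rw [gmap_mul, quatJ_conj]
  ext m
  simp only [PiLp.neg_apply, gmap, qform]
  rw [show (x (finProdFinEquiv.symm m).2 * -qi * star (x (finProdFinEquiv.symm m).2)) =
    -(x (finProdFinEquiv.symm m).2 * qi * star (x (finProdFinEquiv.symm m).2)) by
      simp [mul_neg, neg_mul],
    coordFn_neg]


/-- `level(ℂP^{2k-1}) ≤ 3k`: there exists a continuous map `f : S(ℍ^k) → S^{3k-1}` with
`f(x·e^{iθ}) = f(x)` and `f(x·j) = -f(x)`. -/
theorem level_cp_le (k : ℕ) (hk : 1 ≤ k) :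
    ∃ f : C(hSphere k, rSphere (3 * k)),
      (∀ (θ : ℝ) (x : hSphere k), f (sphereRMul (expI θ) (norm_expI θ) x) = f x) ∧
      (∀ x : hSphere k, f (sphereRMul quatJ norm_quatJ x) = -f x) := by
  classical
  have hne : ∀ x : hSphere k, gmap (x : Hn k) ≠ 0 := fun x =>
    gmap_ne_zero _ (by simpa [mem_sphere_iff_norm] using x.2)
  have hnorm : ∀ x : hSphere k, ‖gmap (x : Hn k)‖ ≠ 0 := fun x =>
    norm_ne_zero_iff.2 (hne x)
  refine ⟨⟨fun x => ⟨‖gmap (x : Hn k)‖⁻¹ • gmap (x : Hn k), ?_⟩, ?_⟩, ?_, ?_⟩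
  · simp only [mem_sphere_iff_norm, sub_zero, norm_smul, norm_inv, norm_norm]
    exact inv_mul_cancel₀ (hnorm _)
  · apply Continuous.subtype_mk
    have hg : Continuous fun x : hSphere k => gmap (x : Hn k) :=
      gmap_continuous.comp continuous_subtype_val
    exact (hg.norm.inv₀ hnorm).smul hg
  · intro θ x
    apply Subtype.ext
    show ‖gmap _‖⁻¹ • gmap _ = ‖gmap _‖⁻¹ • gmap _
    have h : gmap ((sphereRMul (expI θ) (norm_expI θ) x : Hn k)) = gmap (x : Hn k) :=
      gmap_expI (x : Hn k) θ
    rw [h]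
  · intro x
    apply Subtype.ext
    rw [coe_neg_sphere]
    show ‖gmap _‖⁻¹ • gmap _ = -(‖gmap _‖⁻¹ • gmap (x : Hn k))
    have h : gmap ((sphereRMul quatJ norm_quatJ x : Hn k)) = -gmap (x : Hn k) :=
      gmap_quatJ (x : Hn k)
    rw [h, norm_neg, smul_neg]

end
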